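/- For every event list L, every j ∈ Fin n, and every r ∈ Fin k, the folded memory satisfies s_L(j, r) = e_j^{(M_j − r)}: coordinate (j, r) of the memory holds the feature of the (r+1)-th most recent event in L with destination j, and equals 0 if fewer than r+1 events with destination j have occurred. -/

import Mathlib

/-- The shift-and-insert update: `shiftInsert s (j, e)` writes `e` into slot 0
of block `j`, shifts the previous contents of block `j` down by one slot
(discarding the last), and leaves all other blocks unchanged. -/
def shiftInsert {n k : ℕ} [NeZero k] (s : Fin n × Fin k → ℝ)
    (je : Fin n × ℝ) : Fin n × Fin k → ℝ := fun p =>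
  if p = (je.1, 0) then je.2
  else if p.1 = je.1 then s (je.1, p.2 - 1)
  else s p

/-- `sFold n k L` : the left fold of the shift-and-insert update over the
event list `L`, starting from the zero memory vector. -/
def sFold (n k : ℕ) [NeZero k] (L : List (Fin n × ℝ)) : Fin n × Fin k → ℝ :=
  L.foldl shiftInsert 0

/-- `countDest j L` : the number `M_j` of events in `L` with destination `j`. -/
def countDest {n : ℕ} (j : Fin n) (L : List (Fin n × ℝ)) : ℕ :=
  (L.filter fun ev => ev.1 = j).length

/-- `featAt j L l` : the feature `e_j^{(l)}` of the `l`-th event of `L` with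
destination `j` (1-indexed, in order of occurrence), with `e_j^{(0)} := 0`
(covering the convention `e_j^{(l)} := 0` for `l ≤ 0`, since natural
subtraction truncates at `0`). -/
def featAt {n : ℕ} (j : Fin n) (L : List (Fin n × ℝ)) : ℕ → ℝ
  | 0 => 0
  | l + 1 => ((L.filter fun ev => ev.1 = j).map Prod.snd).getD l 0

/-- For every event list `L`, `j ∈ Fin n` and `r ∈ Fin k`,
the folded memory satisfies `s_L(j, r) = e_j^{(M_j − r)}`: slot `r` of block
`j` holds the feature of the `(r+1)`-th most recent event with destination
`j`, and equals `0` if fewer than `r+1` such events have occurred. -/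
lemma sFold_append (n k : ℕ) [NeZero k] (L : List (Fin n × ℝ)) (a : Fin n × ℝ) :
    sFold n k (L ++ [a]) = shiftInsert (sFold n k L) a := by
  simp [sFold, List.foldl_append]

lemma featAt_append_of_le {n : ℕ} (j : Fin n) (L : List (Fin n × ℝ)) (a : Fin n × ℝ)
    (l : ℕ) (hl : l ≤ countDest j L) :
    featAt j (L ++ [a]) l = featAt j L l := by
  cases l with
  | zero => rfl
  | succ m =>
    simp only [featAt, List.filter_append]
    rw [List.map_append, List.getD_append]
    simpa [countDest] using hl

theorem sFold_eq_recent_feature (n k : ℕ) [NeZero n] [NeZero k]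
    (L : List (Fin n × ℝ)) (j : Fin n) (r : Fin k) :
    sFold n k L (j, r) = featAt j L (countDest j L - (r : ℕ)) := by
  induction L using List.reverseRecOn generalizing r with
  | nil => simp [sFold, countDest, featAt]
  | append_singleton L a ih =>
    rw [sFold_append]
    obtain ⟨j', e⟩ := a
    by_cases hj : j = j'
    · subst hj
      have hcount : countDest j (L ++ [(j, e)]) = countDest j L + 1 := by
        simp [countDest, List.filter_append]
      by_cases hr : r = 0
      · subst hr
        have : shiftInsert (sFold n k L) (j, e) (j, 0) = e := by
          simp [shiftInsert]
        rw [this, hcount]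
        simp only [Fin.val_zero, Nat.sub_zero, featAt]
        rw [List.getD_eq_getElem?_getD]
        simp [countDest, List.filter_append]
      · have hstep : shiftInsert (sFold n k L) (j, e) (j, r) = sFold n k L (j, r - 1) := by
          simp [shiftInsert, Prod.ext_iff, hr]
        rw [hstep, ih (r - 1)]
        have hrpos : 1 ≤ (r : ℕ) := Nat.one_le_iff_ne_zero.mpr (by
          exact fun h => hr (Fin.ext (by simp [h])))
        have hk : 1 < k := lt_of_le_of_lt hrpos r.isLt
        have hval : ((r - 1 : Fin k) : ℕ) = (r : ℕ) - 1 := by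
          rw [Fin.coe_sub_iff_le.mpr (by simp [Fin.le_def, Nat.mod_eq_of_lt hk]; omega)]
          simp [Nat.mod_eq_of_lt hk]
        rw [hval, hcount]
        have harith : countDest j L + 1 - (r : ℕ) = countDest j L - ((r : ℕ) - 1) := by
          omega
        rw [harith, featAt_append_of_le]
        omega
    · have hcount : countDest j (L ++ [(j', e)]) = countDest j L := by
        simp [countDest, List.filter_append, hj, Ne.symm hj]
      have hstep : shiftInsert (sFold n k L) (j', e) (j, r) = sFold n k L (j, r) := by
        simp [shiftInsert, Prod.ext_iff, hj, Ne.symm hj]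
      rw [hstep, ih r, hcount, featAt_append_of_le]
      omega
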